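/- The group GL_3(F_5) of invertible 3×3 matrices over the field with 5 elements contains no subgroup isomorphic to A_5 × V_4, the direct product of the alternating group on 5 letters with the Klein four-group. -/

import Mathlib

open Matrix Finset Equiv

/-! Auxiliary: the group `(ZMod 2)^4` does not embed (as a multiplicative system)
into `3×3` matrices over `F₅`.  This is the statement that `GL₃(F₅)` has 2-rank `≤ 3`. -/

abbrev Vsp := Fin 4 → ZMod 2

def pr (e v : Vsp) : ZMod 2 := ∑ i, e i * v i

def sg (t : ZMod 2) : ZMod 5 := if t = 0 then 1 else -1

lemma sg_add : ∀ t u : ZMod 2, sg (t + u) = sg t * sg u := by decide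

lemma pr_add_right (e v w : Vsp) : pr e (v + w) = pr e v + pr e w := by
  simp [pr, mul_add, Finset.sum_add_distrib]

lemma pr_add_left (e f v : Vsp) : pr (e + f) v = pr e v + pr f v := by
  simp [pr, add_mul, Finset.sum_add_distrib]

lemma sum_sg_right : ∀ e : Vsp, (∑ v : Vsp, sg (pr e v)) = if e = 0 then 1 else 0 := by
  decide

lemma sum_sg_left : ∀ v : Vsp, (∑ e : Vsp, sg (pr e v)) = if v = 0 then 1 else 0 := by
  decide

lemma vadd_self : ∀ v : Vsp, v + v = 0 := by decide

lemma zmod2_add_self : ∀ t : ZMod 2, t + t = 0 := by decide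

lemma no_embedding (M : Vsp → Matrix (Fin 3) (Fin 3) (ZMod 5))
    (h1 : M 0 = 1) (hmul : ∀ v w, M (v + w) = M v * M w)
    (hinj : Function.Injective M) : False := by
  classical
  haveI : Fact (Nat.Prime 5) := ⟨by norm_num⟩
  set P : Vsp → Matrix (Fin 3) (Fin 3) (ZMod 5) :=
    fun e => ∑ v : Vsp, sg (pr e v) • M v with hP
  -- orthogonality of the projections
  have horth : ∀ e f, P e * P f = if e = f then P f else 0 := by
    intro e f
    have step1 : P e * P f = ∑ v : Vsp, ∑ u : Vsp, (sg (pr (e + f) v) * sg (pr f u)) • M u := by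
      rw [hP]
      rw [Finset.sum_mul]
      refine Finset.sum_congr rfl fun v _ => ?_
      rw [Finset.mul_sum]
      refine (Fintype.sum_equiv (Equiv.addLeft v) _ _ fun u => ?_).symm
      show (sg (pr (e + f) v) * sg (pr f u)) • M u
        = sg (pr e v) • M v * (sg (pr f (v + u)) • M (v + u))
      rw [smul_mul_smul_comm, ← hmul, show v + (v + u) = u by rw [← add_assoc, vadd_self, zero_add],
        pr_add_right, sg_add, pr_add_left, sg_add]
      ring_nf
    rw [step1]
    have step2 : ∀ v : Vsp, ∑ u : Vsp, (sg (pr (e + f) v) * sg (pr f u)) • M u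
        = sg (pr (e + f) v) • P f := by
      intro v
      rw [hP, Finset.smul_sum]
      exact Finset.sum_congr rfl fun u _ => (smul_smul _ _ _).symm
    rw [Finset.sum_congr rfl fun v _ => step2 v, ← Finset.sum_smul, sum_sg_right]
    by_cases hef : e = f
    · subst hef
      rw [if_pos rfl, if_pos (vadd_self e), one_smul]
    · rw [if_neg hef, if_neg, zero_smul]
      intro h
      exact hef (by rw [← add_zero e, ← vadd_self f, ← add_assoc, h, zero_add])
  -- the projections sum to 1
  have hsum : ∑ e : Vsp, P e = 1 := by
    rw [hP]
    rw [Finset.sum_comm]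
    have : ∀ v : Vsp, ∑ e : Vsp, sg (pr e v) • M v = (if v = 0 then (1 : ZMod 5) else 0) • M v := by
      intro v; rw [← Finset.sum_smul, sum_sg_left]
    rw [Finset.sum_congr rfl fun v _ => this v]
    simp [h1]
  -- Fourier inversion
  have hfour : ∀ v, (∑ e : Vsp, sg (pr e v) • P e) = M v := by
    intro v
    rw [hP]
    have : ∀ e : Vsp, sg (pr e v) • ∑ w : Vsp, sg (pr e w) • M w
        = ∑ w : Vsp, sg (pr e (v + w)) • M w := by
      intro e
      rw [Finset.smul_sum]
      exact Finset.sum_congr rfl fun w _ => by rw [smul_smul, pr_add_right, sg_add]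
    rw [Finset.sum_congr rfl fun e _ => this e, Finset.sum_comm]
    have h2 : ∀ w : Vsp, ∑ e : Vsp, sg (pr e (v + w)) • M w
        = (if v + w = 0 then (1 : ZMod 5) else 0) • M w := by
      intro w; rw [← Finset.sum_smul, sum_sg_left]
    rw [Finset.sum_congr rfl fun w _ => h2 w]
    have h3 : ∀ w : Vsp, (v + w = 0) ↔ (w = v) := by
      intro w
      constructor
      · intro h
        rw [← zero_add w, ← vadd_self v, add_assoc, h, add_zero]
      · rintro rfl; exact vadd_self _
    rw [Finset.sum_congr rfl fun w _ => by rw [if_congr (h3 w) rfl rfl]]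
    simp
  -- the set of nonzero projections has at most 3 elements
  set S : Finset Vsp := Finset.univ.filter (fun e => P e ≠ 0) with hS
  have hScard : S.card ≤ 3 := by
    -- choose for each e ∈ S a vector not killed by P e
    have hex : ∀ e : {x // x ∈ S}, ∃ u : Fin 3 → ZMod 5, P e.1 *ᵥ u ≠ 0 := by
      rintro ⟨e, he⟩
      by_contra hcon
      push_neg at hcon
      have hPe : P e ≠ 0 := (Finset.mem_filter.mp he).2
      apply hPe
      ext i j
      have := congrFun (hcon (Pi.single j 1)) i
      simpa [Matrix.mulVec_single] using this
    choose u hu using hex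
    set w : {x // x ∈ S} → (Fin 3 → ZMod 5) := fun e => P e.1 *ᵥ u e with hw
    have hli : LinearIndependent (ZMod 5) w := by
      rw [Fintype.linearIndependent_iff]
      intro g hg i
      have happ : P i.1 *ᵥ (∑ e, g e • w e) = 0 := by rw [hg, Matrix.mulVec_zero]
      have hlin : P i.1 *ᵥ (∑ e, g e • w e) = ∑ e, g e • (P i.1 *ᵥ w e) := by
        rw [← Matrix.mulVecLin_apply, map_sum]
        simp only [_root_.map_smul, Matrix.mulVecLin_apply]
      have hterm : ∀ e : {x // x ∈ S}, P i.1 *ᵥ w e = if i = e then w e else 0 := by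
        intro e
        rw [hw]
        show P i.1 *ᵥ (P e.1 *ᵥ u e) = _
        rw [Matrix.mulVec_mulVec, horth]
        by_cases hie : i = e
        · subst hie; rw [if_pos rfl, if_pos rfl]
        · rw [if_neg (fun h => hie (Subtype.ext h)), if_neg hie, Matrix.zero_mulVec]
      rw [hlin, Finset.sum_congr rfl fun e _ => by rw [hterm e]] at happ
      have hgw : g i • w i = 0 := by
        rw [Finset.sum_congr rfl (fun e _ => by
          rw [show g e • (if i = e then w e else 0) = if i = e then g e • w e else 0 by
            by_cases h : i = e <;> simp [h]])] at happ
        simpa using happ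
      rcases smul_eq_zero.mp hgw with h | h
      · exact h
      · exact absurd h (hu i)
    have := hli.fintype_card_le_finrank
    rwa [Module.finrank_fin_fun, Fintype.card_coe] at this
  -- pigeonhole: find a nonzero v orthogonal to every e ∈ S
  have hcard_lt : Fintype.card ({x // x ∈ S} → ZMod 2) < Fintype.card Vsp := by
    rw [Fintype.card_fun, Fintype.card_coe]
    have : (2 : ℕ) ^ S.card ≤ 2 ^ 3 := Nat.pow_le_pow_right (by norm_num) hScard
    calc Fintype.card (ZMod 2) ^ S.card = 2 ^ S.card := by norm_num
      _ ≤ 8 := this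
      _ < 16 := by norm_num
      _ = Fintype.card Vsp := by simp [Fintype.card_fun]
  obtain ⟨v1, v2, hne, heq⟩ :=
    Fintype.exists_ne_map_eq_of_card_lt (fun v (e : {x // x ∈ S}) => pr e.1 v) hcard_lt
  set v : Vsp := v1 + v2 with hv
  have hv0 : v ≠ 0 := by
    intro h
    apply hne
    calc v1 = v1 + (v2 + v2) := by rw [vadd_self, add_zero]
      _ = v + v2 := by rw [hv, add_assoc]
      _ = v2 := by rw [h, zero_add]
  have hprv : ∀ e, P e ≠ 0 → pr e v = 0 := by
    intro e hePne
    have heS : e ∈ S := Finset.mem_filter.mpr ⟨Finset.mem_univ _, hePne⟩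
    have := congrFun heq ⟨e, heS⟩
    simp only at this
    rw [hv, pr_add_right, this, zmod2_add_self]
  have hMv : M v = 1 := by
    rw [← hfour v]
    rw [Finset.sum_congr rfl (fun e _ => by
      show sg (pr e v) • P e = P e
      by_cases hPe : P e = 0
      · rw [hPe, smul_zero]
      · rw [hprv e hPe]; show (if (0 : ZMod 2) = 0 then (1:ZMod 5) else -1) • P e = P e
        rw [if_pos rfl, one_smul])]
    exact hsum
  exact hv0 (hinj (hMv.trans h1.symm))

/-! Auxiliary: an injective map from `(ZMod 2)^4` into `A₅ × V₄`. -/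

def aperm : Equiv.Perm (Fin 5) := Equiv.swap 0 1 * Equiv.swap 2 3
def bperm : Equiv.Perm (Fin 5) := Equiv.swap 0 2 * Equiv.swap 1 3

lemma aperm_mem : aperm ∈ alternatingGroup (Fin 5) := by
  rw [Equiv.Perm.mem_alternatingGroup]; decide

lemma bperm_mem : bperm ∈ alternatingGroup (Fin 5) := by
  rw [Equiv.Perm.mem_alternatingGroup]; decide

def Agen : alternatingGroup (Fin 5) := ⟨aperm, aperm_mem⟩
def Bgen : alternatingGroup (Fin 5) := ⟨bperm, bperm_mem⟩

lemma perm_hom : ∀ i j k l : ZMod 2,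
    aperm ^ (i + k).val * bperm ^ (j + l).val
      = aperm ^ i.val * bperm ^ j.val * (aperm ^ k.val * bperm ^ l.val) := by
  decide

lemma perm_inj : ∀ i j k l : ZMod 2,
    aperm ^ i.val * bperm ^ j.val = aperm ^ k.val * bperm ^ l.val → i = k ∧ j = l := by
  decide

/-- `GL₃(F₅)` contains no subgroup isomorphic to `A₅ × V₄`. -/
theorem stmt_13 (H : Subgroup (Matrix.GeneralLinearGroup (Fin 3) (ZMod 5))) :
    ¬ Nonempty (H ≃*
      (alternatingGroup (Fin 5) × (Multiplicative (ZMod 2) × Multiplicative (ZMod 2)))) := by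
  rintro ⟨e⟩
  -- the embedding of `(ZMod 2)^4` into `A₅ × V₄`
  set g : Vsp → (alternatingGroup (Fin 5) × (Multiplicative (ZMod 2) × Multiplicative (ZMod 2))) :=
    fun v => (Agen ^ (v 0).val * Bgen ^ (v 1).val,
      (Multiplicative.ofAdd (v 2), Multiplicative.ofAdd (v 3))) with hg
  have hg1 : g 0 = 1 := by
    simp [hg, show ((0 : Vsp) 0) = 0 from rfl, show ((0 : Vsp) 1) = 0 from rfl,
      show ((0 : Vsp) 2) = 0 from rfl, show ((0 : Vsp) 3) = 0 from rfl,
      show (0 : ZMod 2).val = 0 from rfl]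
  have hgmul : ∀ v w, g (v + w) = g v * g w := by
    intro v w
    rw [hg]
    refine Prod.ext ?_ (Prod.ext rfl rfl)
    · show Agen ^ ((v 0) + (w 0)).val * Bgen ^ ((v 1) + (w 1)).val = _
      apply Subtype.ext
      push_cast [SubmonoidClass.coe_pow]
      show aperm ^ _ * bperm ^ _ = aperm ^ _ * bperm ^ _ * (aperm ^ _ * bperm ^ _)
      exact perm_hom _ _ _ _
  have hginj : Function.Injective g := by
    intro v w hvw
    rw [hg] at hvw
    have h1 := congrArg Prod.fst hvw
    have h2 := congrArg (fun x => x.2.1) hvw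
    have h3 := congrArg (fun x => x.2.2) hvw
    simp only at h1 h2 h3
    have h1' : aperm ^ (v 0).val * bperm ^ (v 1).val
        = aperm ^ (w 0).val * bperm ^ (w 1).val := by
      have := congrArg Subtype.val h1
      simpa [SubmonoidClass.coe_pow, Agen, Bgen] using this
    obtain ⟨h01, h11⟩ := perm_inj _ _ _ _ h1'
    have h2' : v 2 = w 2 := Multiplicative.ofAdd.injective h2
    have h3' : v 3 = w 3 := Multiplicative.ofAdd.injective h3
    funext i
    fin_cases i <;> assumption
  -- transfer along the isomorphism and into the matrix ring
  set M : Vsp → Matrix (Fin 3) (Fin 3) (ZMod 5) :=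
    fun v => ((((e.symm (g v)) : H) : Matrix.GeneralLinearGroup (Fin 3) (ZMod 5)) :
      Matrix (Fin 3) (Fin 3) (ZMod 5)) with hM
  apply no_embedding M
  · rw [hM]
    simp [hg1]
  · intro v w
    rw [hM]
    simp only [hgmul, _root_.map_mul]
    rfl
  · intro v w hvw
    apply hginj
    apply e.symm.injective
    apply Subtype.ext
    apply Units.ext
    exact hvw
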